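/- For any two subspaces H and H' of ℚ³ (as a vector space over ℚ) each of dimension 2, there exists a matrix A in the special linear group SL(3, ℤ) such that the linear automorphism of ℚ³ induced by A (via the inclusion ℤ → ℚ) maps H' onto H. That is, SL₃(ℤ) acts transitively on the set of hyperplanes of ℚ³. -/

import Mathlib

open Matrix Module Submodule

noncomputable section

/-- Componentwise cast `ℤ^3 → ℚ^3` as a `ℤ`-linear map. -/
def castLM : (Fin 3 → ℤ) →ₗ[ℤ] (Fin 3 → ℚ) where
  toFun v := fun i => (v i : ℚ)
  map_add' v w := by funext i; push_cast; simp
  map_smul' c v := by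
    funext i
    simp [zsmul_eq_mul]

lemma castLM_ker : LinearMap.ker castLM = ⊥ := by
  ext v
  simp only [LinearMap.mem_ker, Submodule.mem_bot]
  constructor
  · intro h
    funext i
    have := congrFun h i
    simpa [castLM] using this
  · rintro rfl; simp [castLM]; rfl

lemma castLM_apply (v : Fin 3 → ℤ) (i : Fin 3) : castLM v i = (v i : ℚ) := rfl

/-- Key lemma: every 2-dimensional subspace is the image of the standard
coordinate plane under some element of `SL(3,ℤ)`. -/
lemma key (H : Submodule ℚ (Fin 3 → ℚ)) (hH : Module.finrank ℚ H = 2) :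
    ∃ A : Matrix.SpecialLinearGroup (Fin 3) ℤ,
      Submodule.map
        (Matrix.mulVecLin ((A : Matrix (Fin 3) (Fin 3) ℤ).map (fun x => (x : ℚ))))
        (Submodule.span ℚ {Pi.single 0 1, Pi.single (1 : Fin 3) (1 : ℚ)}) = H := by
  classical
  -- the lattice of integer points of H
  set L : Submodule ℤ (Fin 3 → ℤ) := (H.restrictScalars ℤ).comap castLM with hL
  obtain ⟨n, snf⟩ := L.smithNormalForm (Pi.basisFun ℤ (Fin 3))
  -- a rational basis of H
  let bH : Basis (Fin 2) ℚ H := Module.finBasisOfFinrankEq ℚ H hH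
  let h : Fin 2 → Fin 3 → ℚ := fun i => (bH i : Fin 3 → ℚ)
  have hh_li : LinearIndependent ℚ h :=
    bH.linearIndependent.map' H.subtype (Submodule.ker_subtype H)
  have hmem : ∀ i, h i ∈ H := fun i => (bH i).2
  -- clear denominators
  obtain ⟨d, hd⟩ := IsLocalization.exist_integer_multiples_of_finite
    (nonZeroDivisors ℤ) (fun p : Fin 2 × Fin 3 => h p.1 p.2)
  choose u hu using hd
  have hdne : ((d : ℤ) : ℚ) ≠ 0 := by
    have := nonZeroDivisors.coe_ne_zero d
    exact_mod_cast this
  let w : Fin 2 → Fin 3 → ℤ := fun i j => u (i, j)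
  have hw : ∀ i, castLM (w i) = ((d : ℤ) : ℚ) • h i := by
    intro i
    funext j
    have := hu (i, j)
    simpa [castLM_apply, w, Algebra.smul_def] using this
  have hwmem : ∀ i, w i ∈ L := by
    intro i
    have : castLM (w i) ∈ H := by
      rw [hw]
      exact H.smul_mem _ (hmem i)
    simpa [hL, Submodule.mem_comap] using this
  -- the w's are ℤ-independent, so rank L ≥ 2
  have hsmul_li : LinearIndependent ℚ (fun i => ((d : ℤ) : ℚ) • h i) := by
    have : (fun i => ((d : ℤ) : ℚ) • h i) =
        (fun i => (Units.mk0 (((d : ℤ) : ℚ)) hdne) • h i) := rfl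
    rw [this]
    exact hh_li.units_smul _
  have hw_li : LinearIndependent ℤ (fun i => (⟨w i, hwmem i⟩ : L)) := by
    apply LinearIndependent.of_comp (castLM.comp L.subtype)
    have heq : (⇑(castLM.comp L.subtype) ∘ fun i => (⟨w i, hwmem i⟩ : L)) =
        fun i => ((d : ℤ) : ℚ) • h i := by
      funext i
      simp [hw i]
    rw [heq, LinearIndependent.iff_fractionRing ℤ ℚ]
    exact hsmul_li
  haveI : Module.Finite ℤ L := Module.Finite.of_basis snf.bN
  have hn : 2 ≤ n := by
    have h1 := hw_li.fintype_card_le_finrank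
    have h2 : Module.finrank ℤ L = n :=
      (finrank_eq_card_basis snf.bN).trans (Fintype.card_fin n)
    simpa [h2] using h1
  -- the first two Smith basis vectors of ℤ^3 lie (rationally) in H
  let g : Fin 2 → Fin 3 := fun k => snf.f ⟨(k : ℕ), by omega⟩
  have hg_inj : Function.Injective g := by
    intro a b hab
    have h1 := snf.f.injective hab
    have h2 : (a : ℕ) = (b : ℕ) := by
      have := congrArg (fun x : Fin n => (x : ℕ)) h1
      simpa using this
    exact Fin.ext h2
  have hbMH : ∀ k : Fin 2, castLM (snf.bM (g k)) ∈ H := by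
    intro k
    set i : Fin n := ⟨(k : ℕ), by omega⟩ with hi
    have h1 : (snf.bN i : Fin 3 → ℤ) = snf.a i • snf.bM (snf.f i) := snf.snf i
    have h2 : (snf.bN i : Fin 3 → ℤ) ∈ L := (snf.bN i).2
    have h3 : snf.a i • snf.bM (snf.f i) ∈ L := h1 ▸ h2
    have h4 : castLM (snf.a i • snf.bM (snf.f i)) ∈ H := by
      simpa [hL, Submodule.mem_comap] using h3
    have h5 : ((snf.a i : ℚ)) • castLM (snf.bM (snf.f i)) ∈ H := by
      rw [Int.cast_smul_eq_zsmul ℚ, ← _root_.map_smul]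
      exact h4
    have ha : snf.a i ≠ 0 := by
      intro h0
      have : (snf.bN i : Fin 3 → ℤ) = 0 := by rw [h1, h0, zero_smul]
      exact snf.bN.ne_zero i (Subtype.ext this)
    have haq : ((snf.a i : ℚ)) ≠ 0 := Int.cast_ne_zero.mpr ha
    have := H.smul_mem ((snf.a i : ℚ))⁻¹ h5
    rwa [smul_smul, inv_mul_cancel₀ haq, one_smul] at this
  -- pick a third index and build a basis of ℤ^3 with first two vectors in L
  have hcard : (Finset.univ \ {g 0, g 1} : Finset (Fin 3)).Nonempty := by
    rw [← Finset.card_pos]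
    have h1 : ({g 0, g 1} : Finset (Fin 3)).card ≤ 2 := by
      apply le_trans (Finset.card_insert_le _ _)
      simp
    have h2 := Finset.card_sdiff_add_card_eq_card
      (Finset.subset_univ ({g 0, g 1} : Finset (Fin 3)))
    simp only [Finset.card_univ, Fintype.card_fin] at h2
    omega
  obtain ⟨j2, hj2⟩ := hcard
  simp only [Finset.mem_sdiff, Finset.mem_univ, Finset.mem_insert,
    Finset.mem_singleton, true_and, not_or] at hj2
  have hg01 : g 0 ≠ g 1 := fun h => by simpa using hg_inj h
  let e : Fin 3 → Fin 3 := ![g 0, g 1, j2]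
  have he_inj : Function.Injective e := by
    intro a b hab
    fin_cases a <;> fin_cases b <;>
      simp_all [e, hg01, hg01.symm, hj2.1, hj2.2, Ne.symm hj2.1, Ne.symm hj2.2]
  have he_bij : Function.Bijective e := (Finite.injective_iff_bijective).mp he_inj
  let ε : Fin 3 ≃ Fin 3 := Equiv.ofBijective e he_bij
  let b' : Basis (Fin 3) ℤ (Fin 3 → ℤ) := snf.bM.reindex ε.symm
  have hb' : ∀ j, b' j = snf.bM (e j) := by
    intro j
    simp [b', ε, Basis.reindex_apply]
  -- the matrix whose columns are b'
  let A' : Matrix (Fin 3) (Fin 3) ℤ := Matrix.of fun i j => b' j i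
  have hA'unit : IsUnit A'.det := by
    have hA'eq : A' = (Pi.basisFun ℤ (Fin 3)).toMatrix ⇑b' := by
      ext i j
      simp [A', Basis.toMatrix_apply]
    have := Basis.toMatrix_mul_toMatrix_flip (Pi.basisFun ℤ (Fin 3)) b'
    have hdet : A'.det * (b'.toMatrix ⇑(Pi.basisFun ℤ (Fin 3))).det = 1 := by
      rw [hA'eq, ← Matrix.det_mul, this, Matrix.det_one]
    exact IsUnit.of_mul_eq_one _ hdet
  have hA'det : A'.det = 1 ∨ A'.det = -1 := Int.isUnit_iff.mp hA'unit
  -- fix the determinant by rescaling the third column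
  let A : Matrix (Fin 3) (Fin 3) ℤ := A'.updateCol 2 (A'.det • fun i => A' i 2)
  have hAdet : A.det = 1 := by
    have h1 : A.det = A'.det * (A'.updateCol 2 (fun i => A' i 2)).det :=
      Matrix.det_updateCol_smul A' 2 A'.det _
    rw [Matrix.updateCol_eq_self] at h1
    rw [h1]
    rcases hA'det with h | h <;> rw [h] <;> norm_num
  refine ⟨⟨A, hAdet⟩, ?_⟩
  -- compute the image
  set Aq : Matrix (Fin 3) (Fin 3) ℚ := A.map (fun x => (x : ℚ)) with hAq
  have h23 : (2 : ℕ) ≤ 3 := by omega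
  have hcol : ∀ k : Fin 2, (fun i => Aq i (Fin.castLE h23 k))
      = castLM (snf.bM (g k)) := by
    intro k
    funext i
    have hne : (Fin.castLE h23 k) ≠ (2 : Fin 3) := by
      have hk := k.isLt
      apply Fin.ne_of_val_ne
      simp only [Fin.coe_castLE, Fin.val_two]
      omega
    have h1 : A i (Fin.castLE h23 k) = A' i (Fin.castLE h23 k) :=
      Matrix.updateCol_ne hne
    have h2 : A' i (Fin.castLE h23 k) = snf.bM (g k) i := by
      have : e (Fin.castLE h23 k) = g k := by
        fin_cases k <;> rfl
      simp [A', hb', this]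
    simp [Aq, Matrix.map_apply, h1, h2, castLM_apply]
  have hsingle : ∀ k : Fin 2, Aq.mulVecLin (Pi.single (Fin.castLE h23 k) (1 : ℚ))
      = castLM (snf.bM (g k)) := by
    intro k
    rw [← hcol k]
    funext i
    simp [Matrix.mulVecLin_apply, Matrix.mulVec_single]
  have h00 : (Fin.castLE h23 (0 : Fin 2)) = (0 : Fin 3) := rfl
  have h11 : (Fin.castLE h23 (1 : Fin 2)) = (1 : Fin 3) := rfl
  -- image of the span
  rw [Submodule.map_span]
  have himg : Aq.mulVecLin '' {Pi.single 0 1, Pi.single (1 : Fin 3) (1 : ℚ)}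
      = {castLM (snf.bM (g 0)), castLM (snf.bM (g 1))} := by
    rw [Set.image_insert_eq, Set.image_singleton]
    rw [← h00, ← h11, hsingle 0, hsingle 1]
  rw [himg]
  -- the span equals H
  have hle : Submodule.span ℚ {castLM (snf.bM (g 0)), castLM (snf.bM (g 1))} ≤ H := by
    rw [Submodule.span_le]
    rintro x (rfl | rfl)
    · exact hbMH 0
    · exact hbMH 1
  -- linear independence of the two columns
  have hbM_li : LinearIndependent ℚ (⇑castLM ∘ ⇑snf.bM) := by
    rw [← LinearIndependent.iff_fractionRing ℤ ℚ]
    exact snf.bM.linearIndependent.map' castLM castLM_ker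
  have hpair : LinearIndependent ℚ ((⇑castLM ∘ ⇑snf.bM) ∘ g) := hbM_li.comp g hg_inj
  have hrange : Set.range ((⇑castLM ∘ ⇑snf.bM) ∘ g)
      = {castLM (snf.bM (g 0)), castLM (snf.bM (g 1))} := by
    ext x
    simp only [Set.mem_range, Function.comp_apply, Set.mem_insert_iff, Set.mem_singleton_iff]
    constructor
    · rintro ⟨k, rfl⟩
      fin_cases k <;> simp
    · rintro (rfl | rfl)
      · exact ⟨0, rfl⟩
      · exact ⟨1, rfl⟩
  have hfr : Module.finrank ℚ
      (Submodule.span ℚ {castLM (snf.bM (g 0)), castLM (snf.bM (g 1))}) = 2 := by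
    rw [← hrange, finrank_span_eq_card hpair, Fintype.card_fin]
  exact Submodule.eq_of_le_of_finrank_eq hle (by rw [hfr, hH])

end

theorem SL3Z_transitive_on_hyperplanes
    (H H' : Submodule ℚ (Fin 3 → ℚ))
    (hH : Module.finrank ℚ H = 2) (hH' : Module.finrank ℚ H' = 2) :
    ∃ A : Matrix.SpecialLinearGroup (Fin 3) ℤ,
      Submodule.map
        (Matrix.mulVecLin ((A : Matrix (Fin 3) (Fin 3) ℤ).map (fun x => (x : ℚ))))
        H' = H := by
  obtain ⟨A, hA⟩ := key H hH
  obtain ⟨B, hB⟩ := key H' hH'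
  refine ⟨A * B⁻¹, ?_⟩
  have hcast : ∀ X Y : Matrix.SpecialLinearGroup (Fin 3) ℤ,
      ((X * Y : Matrix.SpecialLinearGroup (Fin 3) ℤ) : Matrix (Fin 3) (Fin 3) ℤ).map
        (fun x => (x : ℚ))
      = ((X : Matrix (Fin 3) (Fin 3) ℤ).map (fun x => (x : ℚ)))
        * ((Y : Matrix (Fin 3) (Fin 3) ℤ).map (fun x => (x : ℚ))) := by
    intro X Y
    rw [Matrix.SpecialLinearGroup.coe_mul]
    exact Matrix.map_mul (f := Int.castRingHom ℚ)
  have hBinv : Submodule.map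
      (Matrix.mulVecLin (((B⁻¹ : Matrix.SpecialLinearGroup (Fin 3) ℤ)
        : Matrix (Fin 3) (Fin 3) ℤ).map (fun x => (x : ℚ)))) H'
      = Submodule.span ℚ {Pi.single 0 1, Pi.single (1 : Fin 3) (1 : ℚ)} := by
    rw [← hB, ← Submodule.map_comp, ← Matrix.mulVecLin_mul, ← hcast, inv_mul_cancel]
    have h1 : ((1 : Matrix.SpecialLinearGroup (Fin 3) ℤ) : Matrix (Fin 3) (Fin 3) ℤ).map
        (fun x => (x : ℚ)) = (1 : Matrix (Fin 3) (Fin 3) ℚ) := by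
      rw [Matrix.SpecialLinearGroup.coe_one]
      exact Matrix.map_one _ (by simp) (by simp)
    rw [h1, Matrix.mulVecLin_one, Submodule.map_id]
  rw [hcast, Matrix.mulVecLin_mul, Submodule.map_comp, hBinv, hA]
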